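/- arXiv:2111.11986 — 3 statements merged into one kernel-verified Lean document; each statement's English description precedes it below -/
import Mathlib

section
/- Let H be a real symmetric n×n matrix with largest eigenvalue v ≥ 0, g ∈ ℝⁿ, and c > 0. If δ ∈ ℝⁿ satisfies gᵀδ + (1/2)·δᵀHδ ≥ c, and g ≠ 0, v > 0, then ‖δ‖₂ ≥ (‖g‖₂/v)·(√(1 + 2vc/‖g‖₂²) − 1). -/
open Matrix

lemma quadform_le_max_eig (n : ℕ) (H : Matrix (Fin n) (Fin n) ℝ) (hH : H.IsHermitian)
    (v : ℝ) (hv : ∀ i, hH.eigenvalues i ≤ v) (δ : Fin n → ℝ) :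
    δ ⬝ᵥ H.mulVec δ ≤ v * ∑ i, δ i ^ 2 := by
  set U : Matrix (Fin n) (Fin n) ℝ := (hH.eigenvectorUnitary : Matrix (Fin n) (Fin n) ℝ)
  set y : Fin n → ℝ := Uᵀ *ᵥ δ with hy
  have hUU : U * Uᵀ = 1 := by
    have := (Matrix.mem_unitaryGroup_iff).mp hH.eigenvectorUnitary.2
    simpa [Matrix.star_eq_conjTranspose] using this
  have key : ∀ (B : Matrix (Fin n) (Fin n) ℝ), δ ⬝ᵥ (U * B * Uᵀ) *ᵥ δ = y ⬝ᵥ B *ᵥ y := by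
    intro B
    rw [← mulVec_mulVec, ← mulVec_mulVec, dotProduct_mulVec δ U]
    congr 1
    rw [hy, ← Matrix.vecMul_transpose, Matrix.transpose_transpose]
  have h1 : δ ⬝ᵥ H.mulVec δ = ∑ i, hH.eigenvalues i * y i ^ 2 := by
    have hspec := hH.spectral_theorem
    have : H = U * diagonal hH.eigenvalues * Uᵀ := by
      simpa [Matrix.star_eq_conjTranspose, U] using hspec
    conv_lhs => rw [this]
    rw [key, dotProduct]
    refine Finset.sum_congr rfl fun i _ => ?_
    rw [mulVec_diagonal]; ring
  have h2 : ∑ i, δ i ^ 2 = ∑ i, y i ^ 2 := by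
    have : δ ⬝ᵥ (U * 1 * Uᵀ) *ᵥ δ = y ⬝ᵥ (1 : Matrix (Fin n) (Fin n) ℝ) *ᵥ y := key 1
    simpa [hUU, dotProduct, sq] using this
  rw [h1, h2, Finset.mul_sum]
  exact Finset.sum_le_sum fun i _ => by nlinarith [sq_nonneg (y i), hv i]

theorem stmt_1 (n : ℕ) (H : Matrix (Fin n) (Fin n) ℝ) (hH : H.IsHermitian)
    (v : ℝ) (hv : IsGreatest (Set.range hH.eigenvalues) v) (hv0 : 0 < v)
    (g δ : Fin n → ℝ) (c : ℝ) (hc : 0 < c) (hg : g ≠ 0)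
    (hδ : g ⬝ᵥ δ + (1 / 2) * (δ ⬝ᵥ H.mulVec δ) ≥ c) :
    Real.sqrt (∑ i, δ i ^ 2) ≥
      (Real.sqrt (∑ i, g i ^ 2) / v) *
        (Real.sqrt (1 + 2 * v * c / (∑ i, g i ^ 2)) - 1) := by
  set G2 : ℝ := ∑ i, g i ^ 2 with hG2
  set D2 : ℝ := ∑ i, δ i ^ 2 with hD2
  set G : ℝ := Real.sqrt G2 with hG
  set D : ℝ := Real.sqrt D2 with hD
  have hG2nn : 0 ≤ G2 := Finset.sum_nonneg fun i _ => sq_nonneg _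
  have hD2nn : 0 ≤ D2 := Finset.sum_nonneg fun i _ => sq_nonneg _
  have hG2pos : 0 < G2 := by
    obtain ⟨i, hi⟩ := Function.ne_iff.mp hg
    exact Finset.sum_pos' (fun i _ => sq_nonneg (g i))
      ⟨i, Finset.mem_univ i, by simpa using pow_pos (abs_pos.mpr hi) 2 |>.trans_eq (by rw [sq_abs])⟩
  have hGpos : 0 < G := Real.sqrt_pos.mpr hG2pos
  have hDnn : 0 ≤ D := Real.sqrt_nonneg _
  have hGsq : G ^ 2 = G2 := Real.sq_sqrt hG2nn
  have hDsq : D ^ 2 = D2 := Real.sq_sqrt hD2nn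
  -- Cauchy–Schwarz
  have hcs : g ⬝ᵥ δ ≤ G * D := by
    have h2 : g ⬝ᵥ δ ≤ Real.sqrt G2 * Real.sqrt D2 := by
      calc g ⬝ᵥ δ = ∑ i, g i * δ i := by rfl
        _ ≤ Real.sqrt (∑ i, g i ^ 2) * Real.sqrt (∑ i, δ i ^ 2) := by
            have := Finset.sum_mul_sq_le_sq_mul_sq Finset.univ g δ
            calc (∑ i, g i * δ i) ≤ |∑ i, g i * δ i| := le_abs_self _
              _ = Real.sqrt ((∑ i, g i * δ i) ^ 2) := (Real.sqrt_sq_eq_abs _).symm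
              _ ≤ Real.sqrt ((∑ i, g i ^ 2) * ∑ i, δ i ^ 2) := Real.sqrt_le_sqrt this
              _ = _ := Real.sqrt_mul (Finset.sum_nonneg fun i _ => sq_nonneg _) _
        _ = Real.sqrt G2 * Real.sqrt D2 := rfl
    exact h2
  -- Rayleigh bound
  have hray : δ ⬝ᵥ H.mulVec δ ≤ v * D2 :=
    quadform_le_max_eig n H hH v (fun i => hv.2 ⟨i, rfl⟩) δ
  -- combined inequality
  have hmain : c ≤ G * D + v / 2 * D ^ 2 := by
    rw [hDsq]; nlinarith
  -- (v D + G)^2 ≥ G2 + 2 v c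
  have hsq : G2 + 2 * v * c ≤ (v * D + G) ^ 2 := by nlinarith
  have hstep : Real.sqrt (G2 + 2 * v * c) ≤ v * D + G := by
    have hnn : 0 ≤ v * D + G := by positivity
    calc Real.sqrt (G2 + 2 * v * c) ≤ Real.sqrt ((v * D + G) ^ 2) := Real.sqrt_le_sqrt hsq
      _ = |v * D + G| := Real.sqrt_sq_eq_abs _
      _ = v * D + G := abs_of_nonneg hnn
  -- rewrite sqrt(1 + 2vc/G2) = sqrt(G2 + 2vc)/G
  have hsqrtrw : Real.sqrt (1 + 2 * v * c / G2) = Real.sqrt (G2 + 2 * v * c) / G := by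
    rw [eq_div_iff (ne_of_gt hGpos), hG, ← Real.sqrt_mul (by positivity)]
    congr 1
    field_simp
  rw [ge_iff_le, hsqrtrw]
  rw [div_mul_eq_mul_div, div_le_iff₀ hv0]
  have : G * (Real.sqrt (G2 + 2 * v * c) / G - 1) = Real.sqrt (G2 + 2 * v * c) - G := by
    field_simp
  rw [this]
  linarith
end

section
/- Let H be a real symmetric n×n matrix (n ≥ 1) with largest eigenvalue v > 0, g ∈ ℝⁿ with ‖g‖₁ > 0, and c > 0. If δ ∈ ℝⁿ satisfies gᵀδ + (1/2)·δᵀHδ ≥ c, then ‖δ‖_∞ ≥ (‖g‖₁/(n·v))·(√(1 + 2·n·v·c/‖g‖₁²) − 1). -/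
open Matrix

lemma rayleigh_aux (n : ℕ) (H : Matrix (Fin n) (Fin n) ℝ) (hH : H.IsHermitian)
    (v : ℝ) (hv : ∀ i, hH.eigenvalues i ≤ v) (hv0 : 0 ≤ v) (δ : Fin n → ℝ) :
    δ ⬝ᵥ H.mulVec δ ≤ v * (δ ⬝ᵥ δ) := by
  set U : Matrix (Fin n) (Fin n) ℝ := (hH.eigenvectorUnitary : Matrix (Fin n) (Fin n) ℝ) with hU
  have hstar : star U = Uᵀ := by
    simp [star_eq_conjTranspose, conjTranspose_eq_transpose_of_trivial]
  set y : Fin n → ℝ := Uᵀ *ᵥ δ with hy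
  have hUU : U * Uᵀ = 1 := by
    have := (Matrix.mem_unitaryGroup_iff).mp hH.eigenvectorUnitary.2
    rwa [hstar] at this
  have h1 : δ ⬝ᵥ H *ᵥ δ = ∑ i, hH.eigenvalues i * (y i)^2 := by
    conv_lhs => rw [hH.spectral_theorem]
    simp only [Unitary.conjStarAlgAut_apply, Unitary.coe_star]
    rw [hstar, ← hU, ← mulVec_mulVec, ← mulVec_mulVec, dotProduct_mulVec δ,
      ← Matrix.mulVec_transpose, ← hy]
    simp only [mulVec_diagonal, dotProduct, Function.comp]
    apply Finset.sum_congr rfl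
    intro i _
    simp; ring
  have h2 : y ⬝ᵥ y = δ ⬝ᵥ δ := by
    rw [hy, dotProduct_mulVec, Matrix.vecMul_transpose, mulVec_mulVec, hUU, one_mulVec]
  rw [h1, ← h2]
  have : y ⬝ᵥ y = ∑ i, (y i)^2 := by simp [dotProduct]; ring_nf
  rw [this, Finset.mul_sum]
  apply Finset.sum_le_sum
  intro i _
  exact mul_le_mul_of_nonneg_right (hv i) (sq_nonneg _)

theorem stmt_2 (n : ℕ) (hn : 1 ≤ n) (H : Matrix (Fin n) (Fin n) ℝ) (hH : H.IsHermitian)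
    (v : ℝ) (hv : IsGreatest (Set.range hH.eigenvalues) v) (hv0 : 0 < v)
    (g δ : Fin n → ℝ) (hg : 0 < ∑ i, |g i|) (c : ℝ) (hc : 0 < c)
    (hδ : g ⬝ᵥ δ + (1 / 2) * (δ ⬝ᵥ H.mulVec δ) ≥ c) :
    ‖δ‖ ≥ ((∑ i, |g i|) / (n * v)) *
      (Real.sqrt (1 + 2 * n * v * c / (∑ i, |g i|) ^ 2) - 1) := by
  set G : ℝ := ∑ i, |g i| with hG
  set m : ℝ := ‖δ‖ with hm
  have hm0 : 0 ≤ m := norm_nonneg _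
  have hδi : ∀ i, |δ i| ≤ m := fun i => by
    simpa [Real.norm_eq_abs] using norm_le_pi_norm δ i
  have hn0 : (0:ℝ) < n := by exact_mod_cast hn
  have hx : (0:ℝ) < n * v := by positivity
  -- bound g ⬝ᵥ δ
  have h1 : g ⬝ᵥ δ ≤ G * m := by
    rw [hG, Finset.sum_mul]
    apply Finset.sum_le_sum
    intro i _
    calc g i * δ i ≤ |g i * δ i| := le_abs_self _
    _ = |g i| * |δ i| := abs_mul _ _
    _ ≤ |g i| * m := mul_le_mul_of_nonneg_left (hδi i) (abs_nonneg _)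
  -- bound quadratic form
  have h2 : δ ⬝ᵥ H.mulVec δ ≤ n * v * m^2 := by
    have hr := rayleigh_aux n H hH v (fun i => hv.2 ⟨i, rfl⟩) hv0.le δ
    have h3 : δ ⬝ᵥ δ ≤ n * m^2 := by
      have : δ ⬝ᵥ δ = ∑ i, (δ i)^2 := by simp [dotProduct]; ring_nf
      rw [this]
      calc ∑ i, (δ i)^2 ≤ ∑ _i : Fin n, m^2 := by
            apply Finset.sum_le_sum
            intro i _
            calc (δ i)^2 = |δ i|^2 := (sq_abs _).symm
            _ ≤ m^2 := pow_le_pow_left₀ (abs_nonneg _) (hδi i) 2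
      _ = n * m^2 := by simp [mul_comm]
    calc δ ⬝ᵥ H.mulVec δ ≤ v * (δ ⬝ᵥ δ) := hr
    _ ≤ v * (n * m^2) := mul_le_mul_of_nonneg_left h3 hv0.le
    _ = n * v * m^2 := by ring
  have key : c ≤ G * m + 1/2 * (n * v * m^2) := by
    calc c ≤ g ⬝ᵥ δ + (1/2) * (δ ⬝ᵥ H.mulVec δ) := hδ
    _ ≤ G * m + 1/2 * (n * v * m^2) := by nlinarith
  have hsq : Real.sqrt (1 + 2 * n * v * c / G^2) ≤ 1 + (n * v) * m / G := by
    have hineq : 1 + 2 * n * v * c / G^2 ≤ (1 + (n * v) * m / G)^2 := by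
      have hGne : G ≠ 0 := ne_of_gt hg
      have hdiff : (1 + (n * v) * m / G)^2 - (1 + 2 * n * v * c / G^2)
          = (2*(n*v)*(G * m - c) + ((n*v)*m)^2) / G^2 := by
        field_simp
        ring
      have hnum : 0 ≤ (2*(n*v)*(G * m - c) + ((n*v)*m)^2) / G^2 := by
        apply div_nonneg _ (sq_nonneg _)
        nlinarith [sq_nonneg ((n:ℝ)*v*m)]
      linarith [hdiff ▸ hnum]
    calc Real.sqrt (1 + 2 * n * v * c / G^2) ≤ Real.sqrt ((1 + (n * v) * m / G)^2) :=
          Real.sqrt_le_sqrt hineq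
    _ = 1 + (n * v) * m / G := Real.sqrt_sq (by positivity)
  calc (G / (n * v)) * (Real.sqrt (1 + 2 * n * v * c / G^2) - 1)
      ≤ (G / (n * v)) * ((n * v) * m / G) := by
        apply mul_le_mul_of_nonneg_left _ (by positivity)
        linarith
  _ = m := by field_simp
end

section
/- Let g ≥ 0, v > 0, c > 0. Define B(g, v) = (g/v)·(√(1 + 2vc/g²) − 1) for g > 0 and B(0, v) = √(2c/v). Then B(g, v₁) > B(g, v₂) whenever 0 < v₁ < v₂, for every g ≥ 0. -/
noncomputable def B (c g v : ℝ) : ℝ :=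
  if 0 < g then (g / v) * (Real.sqrt (1 + 2 * v * c / g ^ 2) - 1)
  else Real.sqrt (2 * c / v)

lemma B_alt (c g v : ℝ) (hc : 0 < c) (hg : 0 < g) (hv : 0 < v) :
    B c g v = (2 * c / g) / (Real.sqrt (1 + 2 * v * c / g ^ 2) + 1) := by
  have hx : (0:ℝ) ≤ 2 * v * c / g ^ 2 := by positivity
  set s := Real.sqrt (1 + 2 * v * c / g ^ 2) with hs
  have hs2 : s ^ 2 = 1 + 2 * v * c / g ^ 2 := by
    rw [hs, Real.sq_sqrt (by linarith)]
  have hspos : 0 ≤ s := Real.sqrt_nonneg _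
  have hsp1 : s + 1 ≠ 0 := by positivity
  rw [B, if_pos hg, ← hs, eq_div_iff hsp1]
  have hg2 : g ^ 2 ≠ 0 := by positivity
  have hs2' : s ^ 2 * g ^ 2 = g ^ 2 + 2 * v * c := by
    field_simp at hs2; linarith
  field_simp
  nlinarith [hs2']

theorem stmt_19 (c : ℝ) (hc : 0 < c) :
    ∀ g : ℝ, 0 ≤ g → ∀ v₁ v₂ : ℝ, 0 < v₁ → v₁ < v₂ → B c g v₁ > B c g v₂ := by
  intro g hg v₁ v₂ h1 h12
  have h2 : 0 < v₂ := h1.trans h12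
  rcases hg.lt_or_eq with hgpos | hgz
  · rw [B_alt c g v₁ hc hgpos h1, B_alt c g v₂ hc hgpos h2]
    have hnum : 0 < 2 * c / g := by positivity
    apply div_lt_div_of_pos_left hnum
    · positivity
    · have : Real.sqrt (1 + 2 * v₁ * c / g ^ 2) < Real.sqrt (1 + 2 * v₂ * c / g ^ 2) := by
        apply Real.sqrt_lt_sqrt (by positivity)
        have : 2 * v₁ * c / g ^ 2 < 2 * v₂ * c / g ^ 2 := by
          apply div_lt_div_of_pos_right ?_ (by positivity)
          nlinarith
        linarith
      linarith
  · subst hgz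
    simp only [B, lt_irrefl, if_neg (lt_irrefl (0:ℝ))]
    apply Real.sqrt_lt_sqrt (by positivity)
    apply div_lt_div_of_pos_left (by positivity) h1 h12
end
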